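/- ζ(1,2) = ζ(3), i.e., ∑_{0<m<n} 1/(m·n²) = ∑_{n≥1} 1/n³. -/

import Mathlib

open scoped BigOperators ENNReal NNReal
open Real

/-- The multiple zeta value `ζ(k₁,…,k_d) = ∑_{0<m₁<⋯<m_d} ∏ 1/m_i^{k_i}`
(as a `tsum` over strictly increasing tuples of positive integers). -/
noncomputable def MZV (k : List ℕ) : ℝ :=
  ∑' m : {f : Fin k.length → ℕ+ // StrictMono f}, ∏ i, 1 / ((m.1 i : ℕ) : ℝ) ^ k.get i

namespace ZetaOneTwoAux
open Finset Filter

/-! ### Telescoping lemmas -/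

lemma tele1 (m : ℕ) (hm : 0 < m) :
    HasSum (fun k : ℕ => 1 / (((m : ℝ) + k) * ((m : ℝ) + k + 1))) (1 / m) := by
  have hm' : (0:ℝ) < m := by exact_mod_cast hm
  have hnn : ∀ k : ℕ, 0 ≤ 1 / (((m : ℝ) + k) * ((m : ℝ) + k + 1)) := by
    intro k; positivity
  rw [hasSum_iff_tendsto_nat_of_nonneg hnn]
  set F : ℕ → ℝ := fun j => 1 / ((m : ℝ) + j) with hF
  have hpt : ∀ k : ℕ, 1 / (((m : ℝ) + k) * ((m : ℝ) + k + 1)) = F k - F (k + 1) := by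
    intro k
    have h1 : (0:ℝ) < (m : ℝ) + k := by positivity
    have h2 : (0:ℝ) < (m : ℝ) + k + 1 := by positivity
    have hcast : ((k+1:ℕ):ℝ) = (k:ℝ) + 1 := by push_cast; ring
    simp only [hF, hcast]
    rw [div_sub_div _ _ h1.ne' (by rw [← add_assoc]; exact h2.ne'), one_div]
    rw [show (1 * ((m:ℝ) + ((k:ℝ) + 1)) - ((m:ℝ) + (k:ℝ)) * 1) = 1 by ring,
      show ((m:ℝ) + (k:ℝ)) * ((m:ℝ) + ((k:ℝ) + 1)) = ((m:ℝ) + k) * ((m:ℝ) + k + 1) by ring,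
      one_div]
  have hsumN : ∀ N : ℕ, ∑ k ∈ range N, 1 / (((m : ℝ) + k) * ((m : ℝ) + k + 1))
      = 1 / (m : ℝ) - F N := by
    intro N
    rw [Finset.sum_congr rfl fun k _ => hpt k, Finset.sum_range_sub' F N]
    simp [hF]
  simp only [hsumN]
  have hf : Tendsto (fun N : ℕ => (m : ℝ) + N) atTop atTop :=
    tendsto_atTop_add_const_left _ _ tendsto_natCast_atTop_atTop
  have h0 : Tendsto F atTop (nhds 0) := by
    simpa [hF, one_div, Pi.inv_def] using hf.inv_tendsto_atTop
  simpa using (tendsto_const_nhds (x := 1/(m:ℝ)) (f := atTop)).sub h0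

lemma tele2 (m : ℕ) (hm : 0 < m) :
    HasSum (fun k : ℕ => 1 / (((k : ℝ) + 1) * ((k : ℝ) + 1 + m)))
      (∑ j ∈ range m, 1 / (((j : ℝ) + 1) * m)) := by
  have hm' : (0:ℝ) < m := by exact_mod_cast hm
  have hnn : ∀ k : ℕ, 0 ≤ 1 / (((k : ℝ) + 1) * ((k : ℝ) + 1 + m)) := by
    intro k; positivity
  rw [hasSum_iff_tendsto_nat_of_nonneg hnn]
  have hsumN : ∀ N : ℕ, ∑ k ∈ range N, 1 / (((k : ℝ) + 1) * ((k : ℝ) + 1 + m))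
      = (1 / (m:ℝ)) * ((∑ k ∈ range m, 1 / ((k : ℝ) + 1))
          - ∑ k ∈ range m, 1 / ((N : ℝ) + (k : ℝ) + 1)) := by
    intro N
    have hpt : ∀ k : ℕ, 1 / (((k : ℝ) + 1) * ((k : ℝ) + 1 + m))
        = (1 / (m:ℝ)) * (1 / ((k:ℝ) + 1) - 1 / ((k:ℝ) + 1 + m)) := by
      intro k
      have h1 : (0:ℝ) < (k:ℝ) + 1 := by positivity
      have h2 : (0:ℝ) < (k:ℝ) + 1 + m := by positivity
      field_simp
      ring
    rw [Finset.sum_congr rfl fun k _ => hpt k, ← Finset.mul_sum]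
    congr 1
    rw [Finset.sum_sub_distrib]
    have hshift : ∑ k ∈ range N, 1 / ((k:ℝ) + 1 + m)
        = (∑ k ∈ range (m + N), 1 / ((k : ℝ) + 1)) - ∑ k ∈ range m, 1 / ((k : ℝ) + 1) := by
      rw [Finset.sum_range_add (fun k => 1 / ((k : ℝ) + 1)) m N]
      have h : ∀ k ∈ range N, 1 / ((((m + k) : ℕ) : ℝ) + 1) = 1 / ((k:ℝ) + 1 + m) := by
        intro k _; push_cast; ring_nf
      rw [Finset.sum_congr rfl h]
      ring
    have hshift2 : ∑ k ∈ range (m + N), 1 / ((k : ℝ) + 1)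
        = (∑ k ∈ range N, 1 / ((k : ℝ) + 1)) + ∑ k ∈ range m, 1 / ((N:ℝ) + (k:ℝ) + 1) := by
      rw [add_comm m N, Finset.sum_range_add (fun k => 1 / ((k : ℝ) + 1)) N m]
      congr 1
      refine Finset.sum_congr rfl fun k _ => ?_
      push_cast; ring_nf
    rw [hshift, hshift2]
    ring
  simp only [hsumN]
  have hcorr : Tendsto (fun N : ℕ => ∑ k ∈ range m, 1 / ((N : ℝ) + (k : ℝ) + 1))
      atTop (nhds 0) := by
    have h : ∀ k ∈ range m, Tendsto (fun N : ℕ => 1 / ((N : ℝ) + (k : ℝ) + 1))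
        atTop (nhds 0) := by
      intro k _
      have hf : Tendsto (fun N : ℕ => (N : ℝ) + (k : ℝ) + 1) atTop atTop :=
        tendsto_atTop_add_const_right _ _
          (tendsto_atTop_add_const_right _ _ tendsto_natCast_atTop_atTop)
      simpa [one_div, Pi.inv_def] using hf.inv_tendsto_atTop
    simpa using tendsto_finset_sum (range m) h
  have hlim := ((tendsto_const_nhds (x := ∑ k ∈ range m, 1 / ((k : ℝ) + 1))
      (f := (atTop : Filter ℕ))).sub hcorr).const_mul (1 / (m:ℝ))
  simp only [sub_zero] at hlim
  convert hlim using 2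
  rw [Finset.mul_sum]
  refine Finset.sum_congr rfl fun j _ => ?_
  have h1 : (0:ℝ) < (j:ℝ) + 1 := by positivity
  field_simp

lemma strictMono_pair (m k : ℕ+) : StrictMono ![m, m + k] := by
  intro a b hab
  fin_cases a <;> fin_cases b <;> first
    | exact absurd hab (by decide)
    | simpa using PNat.lt_add_right m k

lemma mzv_plane : MZV [1, 2]
    = ∑' p : ℕ+ × ℕ+, (1 / (((p.1:ℕ):ℝ) * (((p.1:ℕ):ℝ) + ((p.2:ℕ):ℝ))^2)) := by
  unfold MZV
  show (∑' m : {f : Fin 2 → ℕ+ // StrictMono f},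
      ∏ i : Fin 2, 1 / ((m.1 i : ℕ) : ℝ) ^ ([1,2].get i)) = _
  have key : ∀ (v : Fin 2 → ℕ+),
      (∏ i : Fin 2, 1 / ((v i : ℕ) : ℝ) ^ ([1,2].get i))
        = 1 / (((v 0 : ℕ):ℝ) * ((v 1 : ℕ):ℝ)^2) := by
    intro v
    rw [Fin.prod_univ_two]
    norm_num
    ring
  refine tsum_eq_tsum_of_ne_zero_bij
    (fun q => ⟨![q.1.1, q.1.1 + q.1.2], strictMono_pair _ _⟩) ?_ ?_ ?_
  · rintro ⟨⟨m, k⟩, hq⟩ ⟨⟨m', k'⟩, hq'⟩ h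
    simp only [Subtype.mk.injEq] at h
    have h0 := congrFun h 0
    have h1 := congrFun h 1
    simp only [Matrix.cons_val_zero, Matrix.cons_val_one, Matrix.head_cons] at h0 h1
    have : k = k' := by
      subst h0
      exact add_left_cancel h1
    simp_all
  · rintro ⟨f, hf⟩ hne
    have hlt : f 0 < f 1 := hf (show (0 : Fin 2) < 1 by decide)
    have hltn : (f 0 : ℕ) < (f 1 : ℕ) := hlt
    refine ⟨⟨(f 0, ⟨(f 1 : ℕ) - (f 0 : ℕ), by omega⟩), ?_⟩, ?_⟩
    · -- in support
      simp only [Function.mem_support, PNat.mk_coe]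
      have h1 : (0:ℝ) < ((f 0 : ℕ) : ℝ) := by exact_mod_cast (f 0).pos
      have h2 : (0:ℝ) < ((f 0 : ℕ) : ℝ) + (((f 1 : ℕ) - (f 0 : ℕ) : ℕ) : ℝ) :=
        add_pos_of_pos_of_nonneg h1 (Nat.cast_nonneg _)
      exact ne_of_gt (div_pos one_pos (mul_pos h1 (pow_pos h2 2)))
    · -- equality
      apply Subtype.ext
      funext i
      fin_cases i
      · rfl
      · simp only [Fin.mk_one, Matrix.cons_val_one, Matrix.head_cons]
        rw [← PNat.coe_inj]
        show (f 0 : ℕ) + ((f 1 : ℕ) - (f 0 : ℕ)) = (f 1 : ℕ)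
        omega
  · rintro ⟨⟨m, k⟩, hq⟩
    rw [key]
    simp only [Matrix.cons_val_zero, Matrix.cons_val_one, Matrix.head_cons]
    push_cast
    ring


/-! ### The ENNReal-valued summands -/

noncomputable def gE (p : ℕ+ × ℕ+) : ℝ≥0∞ :=
  ENNReal.ofReal (1 / (((p.1 : ℕ) : ℝ) * (((p.1 : ℕ) : ℝ) + ((p.2 : ℕ) : ℝ)) ^ 2))

noncomputable def hE (p : ℕ+ × ℕ+) : ℝ≥0∞ :=
  ENNReal.ofReal
    (1 / (((p.1 : ℕ) : ℝ) * ((p.2 : ℕ) : ℝ) * (((p.1 : ℕ) : ℝ) + ((p.2 : ℕ) : ℝ))))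

noncomputable def zE (n : ℕ+) : ℝ≥0∞ := ENNReal.ofReal (1 / ((n : ℕ) : ℝ) ^ 3)

lemma pnat_cast_pos (n : ℕ+) : (0 : ℝ) < ((n : ℕ) : ℝ) := by exact_mod_cast n.pos

/-! ### `T = S + S` -/

lemma hE_eq (p : ℕ+ × ℕ+) : hE p = gE p + gE p.swap := by
  obtain ⟨m, k⟩ := p
  have hm := pnat_cast_pos m
  have hk := pnat_cast_pos k
  unfold hE gE
  rw [← ENNReal.ofReal_add (by positivity) (by positivity)]
  congr 1
  simp only [Prod.swap_prod_mk]
  field_simp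
  ring

lemma T1 : ∑' p : ℕ+ × ℕ+, hE p = (∑' p : ℕ+ × ℕ+, gE p) + ∑' p : ℕ+ × ℕ+, gE p := by
  calc ∑' p : ℕ+ × ℕ+, hE p = ∑' p : ℕ+ × ℕ+, (gE p + gE p.swap) := tsum_congr hE_eq
    _ = (∑' p : ℕ+ × ℕ+, gE p) + ∑' p : ℕ+ × ℕ+, gE p.swap := ENNReal.tsum_add
    _ = (∑' p : ℕ+ × ℕ+, gE p) + ∑' p : ℕ+ × ℕ+, gE p := by
        congr 1
        have := (Equiv.prodComm ℕ+ ℕ+).tsum_eq gE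
        simpa [Equiv.coe_prodComm] using this

/-! ### inner sums -/

lemma pnat_tsum_eq (f : ℕ+ → ℝ≥0∞) : ∑' k : ℕ+, f k = ∑' n : ℕ, f n.succPNat := by
  rw [← Equiv.pnatEquivNat.symm.tsum_eq f]
  rfl

lemma inner_h (m : ℕ+) : ∑' k : ℕ+, hE (m, k)
    = ∑ j ∈ range (m : ℕ), ENNReal.ofReal (1 / (((j : ℝ) + 1) * ((m : ℕ) : ℝ) ^ 2)) := by
  have hm := pnat_cast_pos m
  have step1 : ∀ k : ℕ+, hE (m, k)
      = ENNReal.ofReal (1 / ((m : ℕ) : ℝ))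
        * ENNReal.ofReal (1 / (((k : ℕ) : ℝ) * (((k : ℕ) : ℝ) + ((m : ℕ) : ℝ)))) := by
    intro k
    have hk := pnat_cast_pos k
    unfold hE
    rw [← ENNReal.ofReal_mul (by positivity)]
    congr 1
    field_simp
    ring
  rw [tsum_congr step1, ENNReal.tsum_mul_left]
  rw [pnat_tsum_eq]
  have step2 : ∀ n : ℕ,
      ENNReal.ofReal (1 / (((n.succPNat : ℕ) : ℝ) * (((n.succPNat : ℕ) : ℝ) + ((m : ℕ) : ℝ))))
      = ENNReal.ofReal (1 / (((n : ℝ) + 1) * ((n : ℝ) + 1 + ((m : ℕ) : ℝ)))) := by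
    intro n
    congr 2 <;> rw [Nat.succPNat_coe] <;> push_cast <;> ring
  rw [tsum_congr step2]
  rw [← ENNReal.ofReal_tsum_of_nonneg (fun n => by positivity) (tele2 (m : ℕ) m.pos).summable]
  rw [(tele2 (m : ℕ) m.pos).tsum_eq]
  rw [← ENNReal.ofReal_mul (by positivity), Finset.mul_sum]
  have step3 : ∀ j ∈ range (m : ℕ),
      1 / ((m : ℕ) : ℝ) * (1 / (((j : ℝ) + 1) * ((m : ℕ) : ℝ)))
        = 1 / (((j : ℝ) + 1) * ((m : ℕ) : ℝ) ^ 2) := by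
    intro j _
    have hj : (0:ℝ) < (j : ℝ) + 1 := by positivity
    field_simp
  rw [Finset.sum_congr rfl step3]
  exact ENNReal.ofReal_sum_of_nonneg fun j _ => by positivity

/-! ### `T = S + Z` -/

noncomputable def G1 (q : ℕ+ × ℕ) : ℝ≥0∞ :=
  if q.2 + 1 < (q.1 : ℕ) then ENNReal.ofReal (1 / (((q.2 : ℝ) + 1) * ((q.1 : ℕ) : ℝ) ^ 2)) else 0

noncomputable def G2 (q : ℕ+ × ℕ) : ℝ≥0∞ :=
  if q.2 + 1 = (q.1 : ℕ) then ENNReal.ofReal (1 / (((q.2 : ℝ) + 1) * ((q.1 : ℕ) : ℝ) ^ 2)) else 0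

lemma bij1 : ∑' q : ℕ+ × ℕ, G1 q = ∑' p : ℕ+ × ℕ+, gE p := by
  refine tsum_eq_tsum_of_ne_zero_bij
    (fun p : Function.support gE => (p.1.1 + p.1.2, (p.1.1 : ℕ) - 1)) ?_ ?_ ?_
  · rintro ⟨⟨m, k⟩, hp⟩ ⟨⟨m', k'⟩, hp'⟩ h
    dsimp only at h
    simp only [Prod.mk.injEq] at h
    obtain ⟨h1, h2⟩ := h
    have hm : m = m' := by
      have hm0 := m.pos
      have hm0' := m'.pos
      rw [← PNat.coe_inj]
      omega
    subst hm
    have hk : k = k' := add_left_cancel h1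
    simp [hk]
  · rintro ⟨n, j⟩ hq
    have hlt : j + 1 < (n : ℕ) := by
      by_contra hcon
      exact hq (by simp [G1, hcon])
    refine ⟨⟨(⟨j + 1, j.succ_pos⟩, ⟨(n : ℕ) - (j + 1), by omega⟩), ?_⟩, ?_⟩

    · simp only [Function.mem_support]
      unfold gE
      simp only [PNat.mk_coe]
      have h1 : (0:ℝ) < ((j + 1 : ℕ) : ℝ) := by positivity
      have h2 : (0:ℝ) < ((j + 1 : ℕ) : ℝ) + (((n : ℕ) - (j + 1) : ℕ) : ℝ) :=
        add_pos_of_pos_of_nonneg h1 (Nat.cast_nonneg _)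
      exact ne_of_gt (ENNReal.ofReal_pos.mpr (div_pos one_pos (mul_pos h1 (pow_pos h2 2))))
    · simp only [Prod.mk.injEq]
      constructor
      · rw [← PNat.coe_inj]
        show (j + 1) + ((n : ℕ) - (j + 1)) = (n : ℕ)
        omega
      · simp only [PNat.mk_coe]
        omega
  · rintro ⟨⟨m, k⟩, hp⟩
    have hm1 : 1 ≤ (m : ℕ) := m.one_le
    have hk1 : 1 ≤ (k : ℕ) := k.one_le
    unfold G1
    dsimp only
    rw [if_pos (by simp only [PNat.add_coe]; omega)]
    unfold gE
    congr 2
    have : ((((m : ℕ) - 1 : ℕ)) : ℝ) = ((m : ℕ) : ℝ) - 1 := by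
      rw [Nat.cast_sub hm1]
      norm_num
    rw [this]
    push_cast
    ring

lemma bij2 : ∑' q : ℕ+ × ℕ, G2 q = ∑' n : ℕ+, zE n := by
  refine tsum_eq_tsum_of_ne_zero_bij
    (fun n : Function.support zE => (n.1, (n.1 : ℕ) - 1)) ?_ ?_ ?_
  · rintro ⟨n, hn⟩ ⟨n', hn'⟩ h
    dsimp only at h
    simp only [Prod.mk.injEq] at h
    exact Subtype.ext h.1
  · rintro ⟨n, j⟩ hq
    have heq : j + 1 = (n : ℕ) := by
      by_contra hcon
      exact hq (by simp [G2, hcon])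
    refine ⟨⟨n, ?_⟩, ?_⟩
    · simp only [Function.mem_support]
      unfold zE
      have h1 := pnat_cast_pos n
      exact ne_of_gt (ENNReal.ofReal_pos.mpr (by positivity))
    · dsimp only
      simp only [Prod.mk.injEq]
      exact ⟨trivial, by omega⟩
  · rintro ⟨n, hn⟩
    dsimp only
    have hn1 : 1 ≤ (n : ℕ) := n.one_le
    unfold G2
    dsimp only
    rw [if_pos (by omega)]
    unfold zE
    congr 1
    have : ((((n : ℕ) - 1 : ℕ)) : ℝ) = ((n : ℕ) : ℝ) - 1 := by
      rw [Nat.cast_sub hn1]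
      norm_num
    rw [this]
    ring

lemma T2 : ∑' p : ℕ+ × ℕ+, hE p = (∑' p : ℕ+ × ℕ+, gE p) + ∑' n : ℕ+, zE n := by
  rw [ENNReal.tsum_prod' (f := hE)]
  have hG : ∀ (m : ℕ+) (j : ℕ), G1 (m, j) + G2 (m, j)
      = if j < (m : ℕ) then ENNReal.ofReal (1 / (((j : ℝ) + 1) * ((m : ℕ) : ℝ) ^ 2)) else 0 := by
    intro m j
    unfold G1 G2
    dsimp only
    rcases lt_trichotomy (j + 1) ((m : ℕ)) with h | h | h
    · rw [if_pos h, if_neg (by omega), if_pos (by omega), add_zero]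
    · rw [if_neg (by omega), if_pos h, if_pos (by omega), zero_add]
    · rw [if_neg (by omega), if_neg (by omega), if_neg (by omega), add_zero]
  have step1 : ∀ m : ℕ+, ∑' k : ℕ+, hE (m, k) = ∑' j : ℕ, (G1 (m, j) + G2 (m, j)) := by
    intro m
    rw [inner_h m, tsum_congr (hG m),
      tsum_eq_sum (s := range (m : ℕ)) (fun j hj => by rw [if_neg (by simpa using hj)])]
    exact Finset.sum_congr rfl fun j hj => by rw [if_pos (by simpa using hj)]
  rw [tsum_congr step1]
  calc ∑' (m : ℕ+), ∑' j : ℕ, (G1 (m, j) + G2 (m, j))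
      = ∑' q : ℕ+ × ℕ, (G1 q + G2 q) := (ENNReal.tsum_prod' (f := fun q => G1 q + G2 q)).symm
    _ = (∑' q : ℕ+ × ℕ, G1 q) + ∑' q : ℕ+ × ℕ, G2 q := ENNReal.tsum_add
    _ = (∑' p : ℕ+ × ℕ+, gE p) + ∑' n : ℕ+, zE n := by rw [bij1, bij2]

/-! ### Finiteness -/

lemma Sfin : ∑' p : ℕ+ × ℕ+, gE p ≠ ⊤ := by
  have bound : ∀ m : ℕ+, ∑' k : ℕ+, gE (m, k) ≤ ENNReal.ofReal (1 / ((m : ℕ) : ℝ) ^ 2) := by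
    intro m
    have hm := pnat_cast_pos m
    have step1 : ∀ k : ℕ+, gE (m, k)
        = ENNReal.ofReal (1 / ((m : ℕ) : ℝ))
          * ENNReal.ofReal (1 / (((m : ℕ) : ℝ) + ((k : ℕ) : ℝ)) ^ 2) := by
      intro k
      have hk := pnat_cast_pos k
      unfold gE
      rw [← ENNReal.ofReal_mul (by positivity)]
      congr 1
      field_simp
    rw [tsum_congr step1, ENNReal.tsum_mul_left, pnat_tsum_eq]
    have step2 : ∀ n : ℕ,
        ENNReal.ofReal (1 / (((m : ℕ) : ℝ) + ((n.succPNat : ℕ) : ℝ)) ^ 2)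
        = ENNReal.ofReal (1 / (((m : ℕ) : ℝ) + (n : ℝ) + 1) ^ 2) := by
      intro n
      congr 3
      rw [Nat.succPNat_coe]
      push_cast
      ring
    rw [tsum_congr step2]
    have hle : ∀ n : ℕ, 1 / (((m : ℕ) : ℝ) + (n : ℝ) + 1) ^ 2
        ≤ 1 / ((((m : ℕ) : ℝ) + n) * (((m : ℕ) : ℝ) + n + 1)) := by
      intro n
      apply one_div_le_one_div_of_le (by positivity)
      have h1 : ((m : ℕ) : ℝ) + n ≤ ((m : ℕ) : ℝ) + n + 1 := by linarith
      calc (((m : ℕ) : ℝ) + n) * (((m : ℕ) : ℝ) + n + 1)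
          ≤ (((m : ℕ) : ℝ) + n + 1) * (((m : ℕ) : ℝ) + n + 1) := by
            apply mul_le_mul_of_nonneg_right h1 (by positivity)
        _ = (((m : ℕ) : ℝ) + (n : ℝ) + 1) ^ 2 := by ring
    have hsummable : Summable (fun n : ℕ => 1 / (((m : ℕ) : ℝ) + (n : ℝ) + 1) ^ 2) :=
      Summable.of_nonneg_of_le (fun n => by positivity) hle (tele1 (m : ℕ) m.pos).summable
    rw [← ENNReal.ofReal_tsum_of_nonneg (fun n => by positivity) hsummable]
    have htsum_le : (∑' n : ℕ, 1 / (((m : ℕ) : ℝ) + (n : ℝ) + 1) ^ 2) ≤ 1 / ((m : ℕ) : ℝ) := by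
      rw [← (tele1 (m : ℕ) m.pos).tsum_eq]
      exact Summable.tsum_le_tsum hle hsummable (tele1 (m : ℕ) m.pos).summable
    calc ENNReal.ofReal (1 / ((m : ℕ) : ℝ))
          * ENNReal.ofReal (∑' n : ℕ, 1 / (((m : ℕ) : ℝ) + (n : ℝ) + 1) ^ 2)
        ≤ ENNReal.ofReal (1 / ((m : ℕ) : ℝ)) * ENNReal.ofReal (1 / ((m : ℕ) : ℝ)) := by
          exact mul_le_mul_right (ENNReal.ofReal_le_ofReal htsum_le) _
      _ = ENNReal.ofReal (1 / ((m : ℕ) : ℝ) ^ 2) := by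
          rw [← ENNReal.ofReal_mul (by positivity)]
          congr 1
          field_simp
  rw [ENNReal.tsum_prod' (f := gE)]
  have hle2 := ENNReal.tsum_le_tsum bound
  have hfin : (∑' m : ℕ+, ENNReal.ofReal (1 / ((m : ℕ) : ℝ) ^ 2)) ≠ ⊤ := by
    rw [pnat_tsum_eq]
    have hsummable : Summable (fun n : ℕ => 1 / (((n.succPNat : ℕ)) : ℝ) ^ 2) := by
      have h := (Real.summable_one_div_nat_pow (p := 2)).mpr one_lt_two
      have h2 := h.comp_injective Nat.succ_injective
      exact h2.congr fun n => by simp [Nat.succPNat_coe, Function.comp]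
    rw [← ENNReal.ofReal_tsum_of_nonneg (fun n => by positivity) hsummable]
    exact ENNReal.ofReal_ne_top
  exact ne_top_of_le_ne_top hfin hle2

end ZetaOneTwoAux

open ZetaOneTwoAux in
/-- `ζ(1,2) = ζ(3)`. -/
theorem zeta_one_two : MZV [1, 2] = ∑' n : ℕ+, 1 / ((n : ℕ) : ℝ) ^ 3 := by
  have hS : (∑' p : ℕ+ × ℕ+, gE p) = ∑' n : ℕ+, zE n :=
    (ENNReal.add_right_inj Sfin).mp (T1.symm.trans T2)
  calc MZV [1, 2]
      = ∑' p : ℕ+ × ℕ+, (1 / (((p.1 : ℕ) : ℝ) * (((p.1 : ℕ) : ℝ) + ((p.2 : ℕ) : ℝ)) ^ 2)) :=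
        mzv_plane
    _ = ∑' p : ℕ+ × ℕ+, (gE p).toReal :=
        tsum_congr fun p => (ENNReal.toReal_ofReal (by positivity)).symm
    _ = (∑' p : ℕ+ × ℕ+, gE p).toReal :=
        (ENNReal.tsum_toReal_eq fun p => ENNReal.ofReal_ne_top).symm
    _ = (∑' n : ℕ+, zE n).toReal := by rw [hS]
    _ = ∑' n : ℕ+, (zE n).toReal :=
        ENNReal.tsum_toReal_eq fun n => ENNReal.ofReal_ne_top
    _ = ∑' n : ℕ+, 1 / ((n : ℕ) : ℝ) ^ 3 :=
        tsum_congr fun n => ENNReal.toReal_ofReal (by positivity)
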